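/- arXiv:1607.07357 — 2 statements merged into one kernel-verified Lean document; each statement's English description precedes it below -/
import Mathlib

section
/- Let g ∈ SL(4,ℂ) be block-diagonal with 2×2 block (c_{↑↑}, c_{↑↓}; c_{↓↑}, c_{↓↓}) on the span of {↑,↓} and diagonal entries c₀₀ on |0⟩ and c_◇◇ on |◇⟩. For a vector v ∈ ℂ⁴⊗ℂ⁴ with coefficients m_{ij} (i,j ∈ {↑,↓,0,◇}), the polynomial I₀(v) = (m_{↑↑}m_{↓↓} − m_{↑↓}m_{↓↑})·m_{0◇}·m_{◇0} is invariant under the action of g⊗h for any two such block-diagonal matrices g, h in SL(4,ℂ). -/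
open scoped BigOperators

/-- Basis ordering: 0 = ↑, 1 = ↓, 2 = |0⟩, 3 = |◇⟩. Block-diagonal form:
2×2 block on {↑,↓}, scalars on |0⟩ and |◇⟩. -/
def IsBlockDiag (g : Matrix (Fin 4) (Fin 4) ℂ) : Prop :=
  g 0 2 = 0 ∧ g 0 3 = 0 ∧ g 1 2 = 0 ∧ g 1 3 = 0 ∧
  g 2 0 = 0 ∧ g 2 1 = 0 ∧ g 3 0 = 0 ∧ g 3 1 = 0 ∧
  g 2 3 = 0 ∧ g 3 2 = 0

/-- I₀ = (m_{↑↑}m_{↓↓} − m_{↑↓}m_{↓↑})·m_{0◇}·m_{◇0}. -/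
def I₀ (m : Fin 4 → Fin 4 → ℂ) : ℂ :=
  (m 0 0 * m 1 1 - m 0 1 * m 1 0) * m 2 3 * m 3 2

set_option maxHeartbeats 1000000 in
lemma det_block_aux (A : Matrix (Fin 4) (Fin 4) ℂ)
    (h02 : A 0 2 = 0) (h03 : A 0 3 = 0) (h12 : A 1 2 = 0) (h13 : A 1 3 = 0)
    (h20 : A 2 0 = 0) (h21 : A 2 1 = 0) (h30 : A 3 0 = 0) (h31 : A 3 1 = 0)
    (h23 : A 2 3 = 0) (h32 : A 3 2 = 0) :
    A.det = (A 0 0 * A 1 1 - A 0 1 * A 1 0) * (A 2 2 * A 3 3) := by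
  rw [Matrix.det_succ_row_zero, Fin.sum_univ_four]
  simp only [Matrix.det_fin_three, Matrix.submatrix_apply]
  norm_num [Fin.succAbove, Fin.lt_def, h02, h03, h12, h13, h20, h21, h30, h31, h23, h32]
  simp only [show (Fin.succ 2 : Fin 4) = 3 from rfl, h13, h31, h30, h23, h32, mul_zero, zero_mul]
  ring

/-- I₀ is invariant under g⊗h for block-diagonal determinant-one g, h. -/
theorem I₀_invariant (g h : Matrix (Fin 4) (Fin 4) ℂ)
    (hg : IsBlockDiag g) (hh : IsBlockDiag h)
    (hgdet : g.det = 1) (hhdet : h.det = 1)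
    (m : Fin 4 → Fin 4 → ℂ) :
    I₀ (fun i j => ∑ k : Fin 4, ∑ l : Fin 4, g i k * h j l * m k l) = I₀ m := by
  obtain ⟨g02, g03, g12, g13, g20, g21, g30, g31, g23, g32⟩ := hg
  obtain ⟨h02, h03, h12, h13, h20, h21, h30, h31, h23, h32⟩ := hh
  have hg' : (g 0 0 * g 1 1 - g 0 1 * g 1 0) * (g 2 2 * g 3 3) = 1 := by
    rw [← det_block_aux g g02 g03 g12 g13 g20 g21 g30 g31 g23 g32]; exact hgdet
  have hh' : (h 0 0 * h 1 1 - h 0 1 * h 1 0) * (h 2 2 * h 3 3) = 1 := by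
    rw [← det_block_aux h h02 h03 h12 h13 h20 h21 h30 h31 h23 h32]; exact hhdet
  simp only [I₀, Fin.sum_univ_four, g02, g03, g12, g13, g20, g21, g30, g31, g23, g32,
    h02, h03, h12, h13, h20, h21, h30, h31, h23, h32, mul_zero, zero_mul,
    add_zero, zero_add]
  linear_combination ((m 0 0 * m 1 1 - m 0 1 * m 1 0) * m 2 3 * m 3 2 *
      ((g 0 0 * g 1 1 - g 0 1 * g 1 0) * (g 2 2 * g 3 3))) * hh' +
    ((m 0 0 * m 1 1 - m 0 1 * m 1 0) * m 2 3 * m 3 2) * hg'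
end

section
/- The polynomial I₁ = (m_{↑↑0}m_{↓↓0} − m_{↑↓0}m_{↓↑0})·(m_{0↑↑}m_{0↓↓} − m_{0↑↓}m_{0↓↑})·(m_{↑0↑}m_{↓0↓} − m_{↑0↓}m_{↓0↑}) in the coefficients of a three-mode, two-fermion state (with no double occupancy, basis labels {↑,↓,0} per mode) is invariant under g⊗h⊗k for any block-diagonal matrices g,h,k ∈ SL(3,ℂ) of the form (2×2 block on span{↑,↓}) ⊕ (scalar on |0⟩) with determinant 1. -/
set_option maxRecDepth 4000


/-- Block-diagonal 3×3 form: 2×2 block on span{↑,↓} (indices 0,1) ⊕ scalar on |0⟩ (index 2). -/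
def IsBlockDiag3 (g : Matrix (Fin 3) (Fin 3) ℂ) : Prop :=
  g 0 2 = 0 ∧ g 1 2 = 0 ∧ g 2 0 = 0 ∧ g 2 1 = 0

/-- I₁ = (m_{↑↑0}m_{↓↓0} − m_{↑↓0}m_{↓↑0})·(m_{0↑↑}m_{0↓↓} − m_{0↑↓}m_{0↓↑})
·(m_{↑0↑}m_{↓0↓} − m_{↑0↓}m_{↓0↑}), with labels 0=↑,1=↓,2=|0⟩. -/
def I₁ (m : Fin 3 → Fin 3 → Fin 3 → ℂ) : ℂ :=
  (m 0 0 2 * m 1 1 2 - m 0 1 2 * m 1 0 2) *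
  (m 2 0 0 * m 2 1 1 - m 2 0 1 * m 2 1 0) *
  (m 0 2 0 * m 1 2 1 - m 0 2 1 * m 1 2 0)

/-- I₁ is invariant under g⊗h⊗k for block-diagonal determinant-one g, h, k ∈ SL(3,ℂ). -/
theorem I₁_invariant (g h k : Matrix (Fin 3) (Fin 3) ℂ)
    (hg : IsBlockDiag3 g) (hh : IsBlockDiag3 h) (hk : IsBlockDiag3 k)
    (hgdet : g.det = 1) (hhdet : h.det = 1) (hkdet : k.det = 1)
    (m : Fin 3 → Fin 3 → Fin 3 → ℂ) :
    I₁ (fun i j l => ∑ a : Fin 3, ∑ b : Fin 3, ∑ c : Fin 3,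
        g i a * h j b * k l c * m a b c) = I₁ m := by
  obtain ⟨hg1, hg2, hg3, hg4⟩ := hg
  obtain ⟨hh1, hh2, hh3, hh4⟩ := hh
  obtain ⟨hk1, hk2, hk3, hk4⟩ := hk
  rw [Matrix.det_fin_three] at hgdet hhdet hkdet
  rw [hg3, hg4, hg1, hg2] at hgdet
  rw [hh3, hh4, hh1, hh2] at hhdet
  rw [hk3, hk4, hk1, hk2] at hkdet
  have hG : (g 0 0 * g 1 1 - g 0 1 * g 1 0) * g 2 2 = 1 := by linear_combination hgdet
  have hH : (h 0 0 * h 1 1 - h 0 1 * h 1 0) * h 2 2 = 1 := by linear_combination hhdet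
  have hK : (k 0 0 * k 1 1 - k 0 1 * k 1 0) * k 2 2 = 1 := by linear_combination hkdet
  simp only [I₁, Fin.sum_univ_three, hg1, hg2, hg3, hg4, hh1, hh2, hh3, hh4,
    hk1, hk2, hk3, hk4, zero_mul, mul_zero, add_zero, zero_add]
  linear_combination
    (((g 0 0 * g 1 1 - g 0 1 * g 1 0) * g 2 2 + 1) *
      ((h 0 0 * h 1 1 - h 0 1 * h 1 0) * h 2 2)^2 *
      ((k 0 0 * k 1 1 - k 0 1 * k 1 0) * k 2 2)^2 * ((m 0 0 2 * m 1 1 2 - m 0 1 2 * m 1 0 2) * (m 2 0 0 * m 2 1 1 - m 2 0 1 * m 2 1 0) * (m 0 2 0 * m 1 2 1 - m 0 2 1 * m 1 2 0))) * hG +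
    (((h 0 0 * h 1 1 - h 0 1 * h 1 0) * h 2 2 + 1) *
      ((k 0 0 * k 1 1 - k 0 1 * k 1 0) * k 2 2)^2 * ((m 0 0 2 * m 1 1 2 - m 0 1 2 * m 1 0 2) * (m 2 0 0 * m 2 1 1 - m 2 0 1 * m 2 1 0) * (m 0 2 0 * m 1 2 1 - m 0 2 1 * m 1 2 0))) * hH +
    (((k 0 0 * k 1 1 - k 0 1 * k 1 0) * k 2 2 + 1) * ((m 0 0 2 * m 1 1 2 - m 0 1 2 * m 1 0 2) * (m 2 0 0 * m 2 1 1 - m 2 0 1 * m 2 1 0) * (m 0 2 0 * m 1 2 1 - m 0 2 1 * m 1 2 0))) * hK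
end
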